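/- arXiv:2403.02847 — 2 statements merged into one kernel-verified Lean document; each statement's English description precedes it below -/
import Mathlib

section
/- Let H be a complex Hilbert space with dual H', and let b(·,·;s) = s·m(·,·) + a(·,·) where a is bounded by C and coercive with constant γ > 0 (uniformly for Re(s) ≥ α), and m is the pairing induced by a Gelfand triple. If p(s) ∈ H solves b(p(s), v; s) = ⟨q, v⟩ for all v ∈ H for a given q ∈ H', then ‖p(s)‖_H ≤ ‖q‖_{H'}/γ and ‖p(s)‖_{H'} ≤ (1/|s|)·(1 + C/γ)·‖q‖_{H'}. -/
open Complex

/-- A priori estimates in `H` and in the dual `H'` for the solution of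
`b(p, v; s) = ⟨q, v⟩`, where `b(u,v;s) = s·m(u,v) + a(u,v)`, `a` is bounded by `C` and the
form is coercive with constant `γ`, and `m u = ⟨R u, ·⟩` is the Gelfand-triple pairing
with `‖m u‖_{H'} ≤ ‖u‖`.  Then `‖p‖_H ≤ ‖q‖_{H'}/γ` and
`‖p‖_{H'} ≤ (1/|s|)(1 + C/γ)‖q‖_{H'}`. -/
theorem a_priori_estimates_laplace_domain
    (H : Type*) [NormedAddCommGroup H] [InnerProductSpace ℂ H] [CompleteSpace H]
    (m : H → (H →L[ℂ] ℂ)) (hm : ∀ u : H, ‖m u‖ ≤ ‖u‖)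
    (a : H → H → ℂ) (C γ : ℝ) (hC : 0 < C) (hγ : 0 < γ)
    (habdd : ∀ u v : H, ‖a u v‖ ≤ C * ‖u‖ * ‖v‖)
    (α : ℝ) (s : ℂ) (hsα : α ≤ s.re) (hs0 : s ≠ 0)
    (hcoer : ∀ u : H, γ * ‖u‖ ^ 2 ≤ (s * (m u) u + a u u).re)
    (q : H →L[ℂ] ℂ) (p : H)
    (hp : ∀ v : H, s * (m p) v + a p v = q v) :
    ‖p‖ ≤ ‖q‖ / γ ∧ ‖m p‖ ≤ (1 / ‖s‖) * (1 + C / γ) * ‖q‖ := by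
  have hs : 0 < ‖s‖ := by
    simpa [norm_pos_iff] using hs0
  -- first estimate
  have h1 : γ * ‖p‖ ^ 2 ≤ ‖q‖ * ‖p‖ := by
    calc γ * ‖p‖ ^ 2 ≤ (s * (m p) p + a p p).re := hcoer p
      _ = (q p).re := by rw [hp p]
      _ ≤ ‖q p‖ := Complex.re_le_norm _
      _ = ‖q p‖ := rfl
      _ ≤ ‖q‖ * ‖p‖ := q.le_opNorm p
  have hpH : ‖p‖ ≤ ‖q‖ / γ := by
    rcases eq_or_lt_of_le (norm_nonneg p) with h0 | h0
    · rw [← h0]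
      positivity
    · rw [le_div_iff₀ hγ]
      have := h1
      rw [pow_two] at this
      nlinarith
  refine ⟨hpH, ?_⟩
  -- second estimate
  have key : ∀ v : H, ‖(m p) v‖ ≤ (1 / ‖s‖) * (1 + C / γ) * ‖q‖ * ‖v‖ := by
    intro v
    have heq : s * (m p) v = q v - a p v := by
      have := hp v; linear_combination this
    have hbound : ‖s‖ * ‖(m p) v‖ ≤ (‖q‖ + C * (‖q‖ / γ)) * ‖v‖ := by
      calc ‖s‖ * ‖(m p) v‖ = ‖s * (m p) v‖ := by
            rw [norm_mul]
        _ = ‖q v - a p v‖ := by rw [heq]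
        _ ≤ ‖q v‖ + ‖a p v‖ := by
            simpa using norm_sub_le (q v) (a p v)
        _ ≤ ‖q‖ * ‖v‖ + C * ‖p‖ * ‖v‖ := add_le_add (q.le_opNorm v) (habdd p v)
        _ ≤ ‖q‖ * ‖v‖ + C * (‖q‖ / γ) * ‖v‖ := by
            gcongr
        _ = (‖q‖ + C * (‖q‖ / γ)) * ‖v‖ := by ring
    have hr : (1 / ‖s‖) * (1 + C / γ) * ‖q‖ * ‖v‖
        = (‖q‖ + C * (‖q‖ / γ)) * ‖v‖ / ‖s‖ := by
      field_simp
    rw [hr, le_div_iff₀ hs, mul_comm]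
    exact hbound
  have := ContinuousLinearMap.opNorm_le_bound (m p) (by positivity) key
  simpa using this
end

section
/- Fix α ∈ ℝ, β > 0, λ ≥ 0 and η > 1. For every θ ∈ [0, 2π], writing w(θ) = α − β(ηe^{iθ}+1)/(ηe^{iθ}−1), one has |w(θ) + λ|² = (α + λ − β(η²−1)/(η²+1−2η cos θ))² + β²(2η sin θ/(η²+1−2η cos θ))², and this quantity is bounded below by min{ (α+λ−β(η−1)/(η+1))², (α+λ−β(η+1)/(η−1))² }. -/
open Complex Real

/-- Fix `α ∈ ℝ`, `β > 0`, `λ ≥ 0`, `η > 1`.  For `θ ∈ [0,2π]` and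
`w(θ) = α − β(ηe^{iθ}+1)/(ηe^{iθ}−1)`, one has the explicit formula for `|w(θ) + λ|²`
and the lower bound by `min{(α+λ−β(η−1)/(η+1))², (α+λ−β(η+1)/(η−1))²}`. -/
theorem abs_sq_mobius_shifted (α β lam η : ℝ) (hβ : 0 < β) (hlam : 0 ≤ lam)
    (hη : 1 < η) :
    ∀ θ ∈ Set.Icc (0 : ℝ) (2 * π),
      ‖(((α : ℂ) - β * (η * Complex.exp (θ * Complex.I) + 1) /
              (η * Complex.exp (θ * Complex.I) - 1)) + lam)‖ ^ 2
        = (α + lam - β * (η ^ 2 - 1) / (η ^ 2 + 1 - 2 * η * Real.cos θ)) ^ 2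
          + β ^ 2 * (2 * η * Real.sin θ / (η ^ 2 + 1 - 2 * η * Real.cos θ)) ^ 2 ∧
      min ((α + lam - β * (η - 1) / (η + 1)) ^ 2)
          ((α + lam - β * (η + 1) / (η - 1)) ^ 2)
        ≤ ‖(((α : ℂ) - β * (η * Complex.exp (θ * Complex.I) + 1) /
                (η * Complex.exp (θ * Complex.I) - 1)) + lam)‖ ^ 2 := by
  intro θ hθ
  have hsc : Real.sin θ ^ 2 + Real.cos θ ^ 2 = 1 := Real.sin_sq_add_cos_sq θ
  set c := Real.cos θ with hc
  set s := Real.sin θ with hs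
  have hc1 : -1 ≤ c := Real.neg_one_le_cos θ
  have hc2 : c ≤ 1 := Real.cos_le_one θ
  have hη0 : (0:ℝ) < η - 1 := by linarith
  have hη1 : (0:ℝ) < η + 1 := by linarith
  have hd : (0:ℝ) < η ^ 2 + 1 - 2 * η * c := by nlinarith
  set d : ℝ := η ^ 2 + 1 - 2 * η * c with hdd
  have hdc : (d:ℂ) ≠ 0 := by exact_mod_cast hd.ne'
  have hz : (η:ℂ) * Complex.exp (θ * Complex.I) - 1 ≠ 0 := by
    intro h
    have h1 : (η:ℂ) * Complex.exp (θ * Complex.I) = 1 := by linear_combination h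
    have h2 := congrArg (‖·‖) h1
    simp [map_mul, Complex.norm_exp_ofReal_mul_I] at h2
    rw [abs_of_pos (by linarith : (0:ℝ) < η)] at h2
    linarith
  have hsc' : (s:ℂ)^2 + (c:ℂ)^2 = 1 := by exact_mod_cast hsc
  have hND : ((η:ℂ) * Complex.exp (θ * Complex.I) + 1) * (d:ℂ)
      = (((η:ℂ)^2 - 1) - 2*η*s*Complex.I) * ((η:ℂ) * Complex.exp (θ * Complex.I) - 1) := by
    rw [Complex.exp_mul_I, ← Complex.ofReal_cos, ← Complex.ofReal_sin, ← hc, ← hs, hdd]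
    push_cast
    linear_combination (-2*(η:ℂ)^2) * hsc' + (2*(η:ℂ)^2*(s:ℂ)^2) * Complex.I_sq
  have hq : ((η:ℂ) * Complex.exp (θ * Complex.I) + 1) / ((η:ℂ) * Complex.exp (θ * Complex.I) - 1)
      = ((((η:ℂ)^2 - 1) - 2*η*s*Complex.I)) / (d:ℂ) := by
    rw [div_eq_div_iff hz hdc]; linear_combination hND
  have key : (((α : ℂ) - β * (η * Complex.exp (θ * Complex.I) + 1) /
        (η * Complex.exp (θ * Complex.I) - 1)) + lam)
      = ((α + lam - β*(η^2-1)/d : ℝ) : ℂ) + ((β*(2*η*s/d) : ℝ):ℂ) * Complex.I := by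
    rw [mul_div_assoc, hq]
    push_cast
    field_simp
    ring
  rw [key, Complex.sq_norm, Complex.normSq_add_mul_I]
  constructor
  · ring
  · set p := α + lam with hp
    set t := β*(η^2-1)/d with ht
    set vv := β*(2*η*s/d) with hvv
    set t1 := β*(η-1)/(η+1) with ht1e
    set t2 := β*(η+1)/(η-1) with ht2e
    have hd' : η ^ 2 + 1 - 2 * η * c ≠ 0 := hd.ne'
    have ht1 : t1 ≤ t := by
      rw [ht1e, ht, div_le_div_iff₀ hη1 hd, hdd]
      nlinarith [mul_nonneg (mul_nonneg hβ.le hη0.le)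
        (mul_nonneg (by linarith : (0:ℝ) ≤ η) (by linarith : (0:ℝ) ≤ 1 + c))]
    have ht2 : t ≤ t2 := by
      rw [ht2e, ht, div_le_div_iff₀ hd hη0, hdd]
      nlinarith [mul_nonneg (mul_nonneg hβ.le hη1.le)
        (mul_nonneg (by linarith : (0:ℝ) ≤ η) (by linarith : (0:ℝ) ≤ 1 - c))]
    have hs2 : s^2 = 1 - c^2 := by linarith
    have hvv2 : vv^2 = (t2 - t) * (t - t1) := by
      have hd0 : d ≠ 0 := hd.ne'
      have h1 : vv^2 = 4*β^2*η^2*s^2/d^2 := by rw [hvv]; field_simp; ring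
      rw [h1, hs2, ht2e, ht, ht1e, hdd]
      rw [div_eq_iff (pow_ne_zero 2 hd'), div_sub_div _ _ hη0.ne' hd', div_sub_div _ _ hd' hη1.ne', div_mul_div_comm, div_mul_eq_mul_div, eq_div_iff (mul_ne_zero (mul_ne_zero hη0.ne' hd') (mul_ne_zero hd' hη1.ne'))]
      ring
    rcases le_total (2*p) (t1 + t2) with h | h
    · refine le_trans (min_le_left _ _) ?_
      nlinarith [hvv2, mul_nonneg (sub_nonneg.2 ht1) (by linarith : (0:ℝ) ≤ t1 + t2 - 2*p)]
    · refine le_trans (min_le_right _ _) ?_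
      nlinarith [hvv2, mul_nonneg (sub_nonneg.2 ht2) (by linarith : (0:ℝ) ≤ 2*p - (t1 + t2))]
end
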